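/- For all integers n ≥ 0, pl̄(4n+3) ≡ 0 (mod 4). -/

import Mathlib

open PowerSeries

/-- The formal power series `(1+q^k)/(1-q^k)` in `ℤ⟦q⟧`. -/
noncomputable def fps (k : ℕ) : PowerSeries ℤ :=
  (1 + (PowerSeries.X : PowerSeries ℤ) ^ k) *
    PowerSeries.invOfUnit (1 - (PowerSeries.X : PowerSeries ℤ) ^ k) 1

/-- The number of overpartitions of `n`: the coefficient of `q^n` in
`∏_{k≥1} (1+q^k)/(1-q^k)`.  Since each factor with `k > n` contributes only `1`
to coefficients up to degree `n`, the product may be truncated at `k = n`. -/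
noncomputable def pbar (n : ℕ) : ℤ :=
  PowerSeries.coeff (R := ℤ) n (∏ k ∈ Finset.Icc 1 n, fps k)

/-- The number of plane overpartitions of `n`: the coefficient of `q^n` in
`∏_{k≥1} ((1+q^k)/(1-q^k))^k`, truncated at `k = n` (factors with `k > n` do not
affect coefficients up to degree `n`). -/
noncomputable def plbar (n : ℕ) : ℤ :=
  PowerSeries.coeff (R := ℤ) n (∏ k ∈ Finset.Icc 1 n, fps k ^ k)

-- auxiliary
noncomputable def SS (k : ℕ) : PowerSeries (ZMod 4) :=
  PowerSeries.mk fun m => if k ∣ m then 1 else 0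

lemma four_eq_zero : (4 : PowerSeries (ZMod 4)) = 0 := by
  have h : (4 : PowerSeries (ZMod 4)) = PowerSeries.C (R := ZMod 4) 4 := (map_ofNat (C (R := ZMod 4)) 4).symm
  rw [h, show (4 : ZMod 4) = 0 from rfl, map_zero]

lemma one_sub_mul_SS (k : ℕ) (hk : 1 ≤ k) :
    (1 - (X : PowerSeries (ZMod 4)) ^ k) * SS k = 1 := by
  ext n
  rw [sub_mul, one_mul, map_sub, coeff_X_pow_mul']
  rcases Nat.eq_zero_or_pos n with rfl | hn
  · simp [SS, Nat.not_succ_le_zero, hk]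
    omega
  · rw [coeff_one, if_neg hn.ne']
    simp only [SS, coeff_mk]
    rcases le_or_gt k n with h | h
    · rw [if_pos h]
      have hiff : k ∣ n - k ↔ k ∣ n := by
        constructor
        · intro hd; have := Nat.dvd_add hd (dvd_refl k); rwa [Nat.sub_add_cancel h] at this
        · intro hd; exact Nat.dvd_sub hd (dvd_refl k)
      by_cases hd : k ∣ n
      · rw [if_pos hd, if_pos (hiff.2 hd), sub_self]
      · rw [if_neg hd, if_neg (fun c => hd (hiff.1 c)), sub_self]
    · rw [if_neg (not_le.2 h), if_neg (fun c => absurd (Nat.le_of_dvd hn c) (not_le.2 h)), sub_zero]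


lemma map_fps (k : ℕ) (hk : 1 ≤ k) :
    PowerSeries.map (Int.castRingHom (ZMod 4)) (fps k)
      = 1 + 2 * ((X : PowerSeries (ZMod 4)) ^ k * SS k) := by
  have hcc : constantCoeff (R := ℤ) (1 - X ^ k) = ((1 : ℤˣ) : ℤ) := by
    simp [map_sub, constantCoeff_X, zero_pow (by omega : k ≠ 0)]
  have h1 : ((1 : PowerSeries ℤ) - X ^ k) * invOfUnit (1 - X ^ k) 1 = 1 :=
    mul_invOfUnit _ _ hcc
  have h2 : ((1 : PowerSeries (ZMod 4)) - X ^ k) *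
      PowerSeries.map (Int.castRingHom (ZMod 4)) (invOfUnit (1 - X ^ k) 1) = 1 := by
    have := congrArg (PowerSeries.map (Int.castRingHom (ZMod 4))) h1
    simpa [map_mul, map_sub, map_pow, PowerSeries.map_X] using this
  have h3 : PowerSeries.map (Int.castRingHom (ZMod 4)) (invOfUnit (1 - X ^ k) 1) = SS k := by
    set A := PowerSeries.map (Int.castRingHom (ZMod 4)) (invOfUnit ((1:PowerSeries ℤ) - X ^ k) 1)
    calc A = A * (((1 : PowerSeries (ZMod 4)) - X ^ k) * SS k) := by
              rw [one_sub_mul_SS k hk, mul_one]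
      _ = (((1 : PowerSeries (ZMod 4)) - X ^ k) * A) * SS k := by ring
      _ = SS k := by rw [mul_comm ((1 : PowerSeries (ZMod 4)) - X ^ k) A] at h2 ⊢
                     rw [h2, one_mul]
  rw [fps, map_mul, h3, map_add, map_one, map_pow, PowerSeries.map_X]
  calc ((1 : PowerSeries (ZMod 4)) + X ^ k) * SS k
      = ((1 - X ^ k) + 2 * X ^ k) * SS k := by ring
    _ = 1 + 2 * (X ^ k * SS k) := by
        rw [add_mul, one_sub_mul_SS k hk]; ring

lemma sq_one (h : PowerSeries (ZMod 4)) : (1 + 2 * h) ^ 2 = 1 := by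
  have : ((1 : PowerSeries (ZMod 4)) + 2 * h) ^ 2 = 1 + 4 * (h + h ^ 2) := by ring
  rw [this, four_eq_zero, zero_mul, add_zero]

lemma prod_aux (s : Finset ℕ) (h : ℕ → PowerSeries (ZMod 4)) :
    ∏ k ∈ s, (1 + 2 * h k) = 1 + 2 * ∑ k ∈ s, h k := by
  classical
  induction s using Finset.cons_induction with
  | empty => simp
  | cons a s ha ih =>
    rw [Finset.prod_cons, ih, Finset.sum_cons]
    have : ((1:PowerSeries (ZMod 4)) + 2 * h a) * (1 + 2 * ∑ k ∈ s, h k)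
        = 1 + 2 * (h a + ∑ k ∈ s, h k) + 4 * (h a * ∑ k ∈ s, h k) := by ring
    rw [this, four_eq_zero, zero_mul, add_zero]

lemma coeff_X_SS (k N : ℕ) (hk : 1 ≤ k) (hkN : k ≤ N) :
    PowerSeries.coeff (R := ZMod 4) N ((X : PowerSeries (ZMod 4)) ^ k * SS k)
      = if k ∣ N then 1 else 0 := by
  rw [coeff_X_pow_mul', if_pos hkN]
  simp only [SS, coeff_mk]
  have hiff : k ∣ N - k ↔ k ∣ N := by
    constructor
    · intro hd; have := Nat.dvd_add hd (dvd_refl k); rwa [Nat.sub_add_cancel hkN] at this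
    · intro hd; exact Nat.dvd_sub hd (dvd_refl k)
  by_cases hd : k ∣ N
  · rw [if_pos (hiff.2 hd), if_pos hd]
  · rw [if_neg (fun c => hd (hiff.1 c)), if_neg hd]

lemma filter_eq_divisors (N : ℕ) (hodd : N % 2 = 1) :
    ((Finset.Icc 1 N).filter (fun k => k % 2 = 1)).filter (· ∣ N) = N.divisors := by
  ext d
  simp only [Finset.mem_filter, Finset.mem_Icc, Nat.mem_divisors]
  constructor
  · rintro ⟨⟨⟨h1, h2⟩, _⟩, h3⟩
    exact ⟨h3, by omega⟩
  · rintro ⟨hd, hN⟩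
    have hN0 : 0 < N := Nat.pos_of_ne_zero hN
    have h1 : 1 ≤ d := Nat.pos_of_dvd_of_pos hd hN0
    have h2 : d ≤ N := Nat.le_of_dvd hN0 hd
    refine ⟨⟨⟨h1, h2⟩, ?_⟩, hd⟩
    by_contra h
    have h2d : 2 ∣ d := by omega
    obtain ⟨c, hc⟩ := h2d.trans hd
    omega

lemma not_sq (n d : ℕ) : d * d ≠ 4 * n + 3 := by
  rcases Nat.even_or_odd d with ⟨t, rfl⟩ | ⟨t, rfl⟩
  · intro h; have : 4 * (t * t) = 4 * n + 3 := by ring_nf; ring_nf at h; omega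
    omega
  · intro h
    have : 4 * (t * t + t) + 1 = 4 * n + 3 := by ring_nf; ring_nf at h; omega
    omega

lemma divisors_sum_eq (n : ℕ) :
    ∑ _d ∈ (4 * n + 3).divisors, (2 : ZMod 4) = 0 := by
  set N := 4 * n + 3 with hN
  have hN0 : N ≠ 0 := by omega
  apply Finset.sum_involution (g := fun d hd => N / d)
  · intro a ha; decide
  · intro a ha h
    intro hc
    have haN : a ∣ N := (Nat.mem_divisors.mp ha).1
    have : a * a = N := by
      have := Nat.div_mul_cancel haN
      rw [hc] at this
      linarith
    exact not_sq n a this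
  · intro a ha
    rw [Nat.mem_divisors] at ha ⊢
    exact ⟨Nat.div_dvd_of_dvd ha.1, hN0⟩
  · intro a ha
    exact Nat.div_div_self (Nat.mem_divisors.mp ha).1 hN0

/-- For all `n ≥ 0`, `pl̄(4n+3) ≡ 0 (mod 4)`. -/
theorem plbar_four_n_three_mod_four (n : ℕ) :
    plbar (4 * n + 3) ≡ 0 [ZMOD 4] := by
  set N := 4 * n + 3 with hNdef
  have hNodd : N % 2 = 1 := by omega
  set φ := Int.castRingHom (ZMod 4) with hφ
  have key : ((plbar N : ℤ) : ZMod 4) = 0 := by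
    have hc : ((plbar N : ℤ) : ZMod 4)
        = PowerSeries.coeff (R := ZMod 4) N
            (PowerSeries.map φ (∏ k ∈ Finset.Icc 1 N, fps k ^ k)) := by
      rw [PowerSeries.coeff_map]; rfl
    rw [hc, map_prod]
    have hprod : ∏ k ∈ Finset.Icc 1 N, PowerSeries.map φ (fps k ^ k)
        = 1 + 2 * ∑ k ∈ (Finset.Icc 1 N).filter (fun k => k % 2 = 1),
            (X : PowerSeries (ZMod 4)) ^ k * SS k := by
      rw [← prod_aux]
      rw [Finset.prod_filter]
      apply Finset.prod_congr rfl
      intro k hk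
      have hk1 : 1 ≤ k := (Finset.mem_Icc.mp hk).1
      rw [map_pow, map_fps k hk1]
      set a : PowerSeries (ZMod 4) := 1 + 2 * ((X : PowerSeries (ZMod 4)) ^ k * SS k) with ha
      have hsq : a ^ 2 = 1 := sq_one _
      have hred : a ^ k = a ^ (k % 2) := by
        conv_lhs => rw [← Nat.div_add_mod k 2]
        rw [pow_add, pow_mul, hsq, one_pow, one_mul]
      rcases Nat.mod_two_eq_zero_or_one k with h | h
      · rw [hred, h, pow_zero, if_neg (by omega)]
      · rw [hred, h, pow_one, if_pos rfl]
    rw [hprod, map_add, PowerSeries.coeff_one, if_neg (by omega : ¬ N = 0)]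
    have h2C : (2 : PowerSeries (ZMod 4)) = PowerSeries.C (R := ZMod 4) 2 :=
      (map_ofNat (C (R := ZMod 4)) 2).symm
    rw [h2C, PowerSeries.coeff_C_mul, map_sum]
    have hterm : ∀ k ∈ (Finset.Icc 1 N).filter (fun k => k % 2 = 1),
        PowerSeries.coeff (R := ZMod 4) N ((X : PowerSeries (ZMod 4)) ^ k * SS k)
          = if k ∣ N then (1 : ZMod 4) else 0 := by
      intro k hk
      obtain ⟨hk', _⟩ := Finset.mem_filter.mp hk
      obtain ⟨h1, h2⟩ := Finset.mem_Icc.mp hk'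
      exact coeff_X_SS k N h1 h2
    rw [Finset.sum_congr rfl hterm, ← Finset.sum_filter, filter_eq_divisors N hNodd]
    rw [Finset.mul_sum]
    simpa using divisors_sum_eq n
  have := (ZMod.intCast_eq_intCast_iff (plbar N) 0 4).mp
  simpa using this (by simpa using key)
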